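/- Let s ∈ (1/2, 1] and let G_s = F_s·F_s'. Then there exists a constant k_s > 0 such that for every t ∈ ℝ with |t| ≤ 1, |G_s(t)| ≤ k_s·F_s(t)^{2 − 1/s}. -/

import Mathlib

/-- The cutoff function `θ` of Definition 4.3: `θ(t) = (3/8)|t|^{1/2}(|t|² − (10/3)|t| + 5)`
for `|t| ≤ 1` and `θ(t) = 1` for `|t| > 1`. -/
noncomputable def theta (t : ℝ) : ℝ :=
  if |t| ≤ 1 then (3 / 8) * |t| ^ ((1 : ℝ) / 2) * (|t| ^ 2 - (10 / 3) * |t| + 5) else 1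

/-- The auxiliary function `F_s(t) = θ(t)·|t|^s` of Definition 4.3. -/
noncomputable def Fs (s t : ℝ) : ℝ := theta t * |t| ^ s

open Real Filter Set

lemma Fs_eq_g (s : ℝ) {t : ℝ} (ht0 : 0 < t) (ht1 : t ≤ 1) :
    Fs s t = (3/8) * t ^ (s + 1/2) * (t^2 - (10/3)*t + 5) := by
  have habs : |t| = t := abs_of_pos ht0
  simp only [Fs, theta, habs, if_pos ht1]
  rw [Real.rpow_add ht0]
  ring

lemma Fs_neg (s t : ℝ) : Fs s (-t) = Fs s t := by
  simp [Fs, theta, abs_neg]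

noncomputable def Dd (s t : ℝ) : ℝ :=
  (3/8) * ((s+1/2) * t ^ (s-1/2) * (t^2 - (10/3)*t + 5) + t ^ (s+1/2) * (2*t - 10/3))

lemma hasDerivAt_g (s : ℝ) {t : ℝ} (ht0 : 0 < t) :
    HasDerivAt (fun x => (3/8) * x ^ (s + 1/2) * (x^2 - (10/3)*x + 5)) (Dd s t) t := by
  have h1 : HasDerivAt (fun x : ℝ => x ^ (s + 1/2)) ((s + 1/2) * t ^ (s + 1/2 - 1)) t :=
    Real.hasDerivAt_rpow_const (Or.inl ht0.ne')
  have h2 : HasDerivAt (fun x : ℝ => x^2 - (10/3)*x + 5) (2*t - 10/3) t := by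
    have := (((hasDerivAt_pow 2 t).sub ((hasDerivAt_id t).const_mul (10/3))).add_const 5)
    simpa using this
  have := (h1.const_mul (3/8)).mul h2
  have hD : Dd s t = 3/8 * ((s + 1/2) * t ^ (s + 1/2 - 1)) * (t^2 - (10/3)*t + 5)
      + 3/8 * t ^ (s + 1/2) * (2*t - 10/3) := by
    have : s + 1/2 - 1 = s - 1/2 := by ring
    rw [this]
    simp only [Dd]
    ring
  rw [hD]
  exact this

lemma hasDerivAt_Fs (s : ℝ) {t : ℝ} (ht0 : 0 < t) (ht1 : t < 1) :
    HasDerivAt (Fs s) (Dd s t) t := by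
  refine (hasDerivAt_g s ht0).congr_of_eventuallyEq ?_
  have hmem : Ioo (0:ℝ) 1 ∈ nhds t := Ioo_mem_nhds ht0 ht1
  filter_upwards [hmem] with x hx
  exact Fs_eq_g s hx.1 hx.2.le

lemma hasDerivAt_Fs_one (s : ℝ) (_hs : 0 < s) : HasDerivAt (Fs s) s 1 := by
  have hD1 : Dd s 1 = s := by simp [Dd]; ring
  -- left
  have hleft : HasDerivWithinAt (Fs s) s (Iic 1) 1 := by
    have hg := ((hasDerivAt_g s one_pos).hasDerivWithinAt (s := Ioc (0:ℝ) 1)).congr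
      (fun x hx => Fs_eq_g s hx.1 hx.2) (Fs_eq_g s one_pos le_rfl)
    rw [hD1] at hg
    refine hg.mono_of_mem_nhdsWithin ?_
    have : Ioi (0:ℝ) ∈ nhdsWithin 1 (Iic 1) :=
      nhdsWithin_le_nhds (Ioi_mem_nhds one_pos)
    have h2 : Iic (1:ℝ) ∈ nhdsWithin 1 (Iic 1) := self_mem_nhdsWithin
    filter_upwards [this, h2] with x hx hx2
    exact ⟨hx, hx2⟩
  -- right
  have hright : HasDerivWithinAt (Fs s) s (Ici 1) 1 := by
    have hg : HasDerivAt (fun x : ℝ => x ^ s) (s * (1:ℝ) ^ (s - 1)) 1 :=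
      Real.hasDerivAt_rpow_const (Or.inl one_ne_zero)
    rw [Real.one_rpow, mul_one] at hg
    refine (hg.hasDerivWithinAt (s := Ici 1)).congr (fun x hx => ?_) ?_
    · have hx1 : (1:ℝ) ≤ x := hx
      have habs : |x| = x := abs_of_pos (lt_of_lt_of_le one_pos hx1)
      rcases eq_or_lt_of_le hx1 with h | h
      · simp [Fs, theta, ← h]
        norm_num
      · simp [Fs, theta, habs, not_le.mpr h]
    · simp [Fs, theta]
      norm_num
  have := hleft.union hright
  rw [Iic_union_Ici, hasDerivWithinAt_univ] at this
  exact this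

set_option maxHeartbeats 1000000 in
lemma key_bound (s : ℝ) (hs1 : 1/2 < s) (hs2 : s ≤ 1) {t : ℝ} (ht0 : 0 < t) (ht1 : t < 1) :
    |Fs s t * Dd s t| ≤ (975/128) * Fs s t ^ (2 - 1/s) := by
  have hs0 : 0 < s := lt_trans (by norm_num) hs1
  set A := t ^ (s + 1/2) with hA
  set B := t ^ (s - 1/2) with hB
  have hDd : Dd s t = (3/8) * ((s+1/2) * B * (t^2 - (10/3)*t + 5) + A * (2*t - 10/3)) := rfl
  have hFs : Fs s t = (3/8) * A * (t^2 - (10/3)*t + 5) := Fs_eq_g s ht0 ht1.le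
  have hApos : 0 < A := Real.rpow_pos_of_pos ht0 _
  have hBpos : 0 < B := Real.rpow_pos_of_pos ht0 _
  have hAB : A ≤ B := Real.rpow_le_rpow_of_exponent_ge ht0 ht1.le (by linarith)
  have hB1 : B ≤ 1 := Real.rpow_le_one ht0.le ht1.le (by linarith)
  have hABeq : A * B = t ^ (2*s) := by
    rw [hA, hB, ← Real.rpow_add ht0]; congr 1; ring
  have hApow : A ^ (2 - 1/s) = t ^ ((s + 1/2) * (2 - 1/s)) := by
    rw [hA, ← Real.rpow_mul ht0.le]
  clear_value A B
  have hP1 : (8:ℝ)/3 ≤ t^2 - (10/3)*t + 5 := by nlinarith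
  have hP2 : t^2 - (10/3)*t + 5 ≤ 5 := by nlinarith
  have hFsle : Fs s t ≤ (15/8) * A := by rw [hFs]; nlinarith
  have hFsge : A ≤ Fs s t := by rw [hFs]; nlinarith
  have hFspos : 0 < Fs s t := lt_of_lt_of_le hApos hFsge
  -- bound on Dd
  have hDle : |Dd s t| ≤ (65/16) * B := by
    have h1 : (s+1/2) * B * (t^2 - (10/3)*t + 5) ≤ (3/2) * B * 5 := by
      have := mul_le_mul_of_nonneg_left
        (mul_le_mul (show s+1/2 ≤ 3/2 by linarith) hP2 (by linarith) (by norm_num)) hBpos.le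
      nlinarith [this]
    have h1' : 0 ≤ (s+1/2) * B * (t^2 - (10/3)*t + 5) := by positivity
    have h2 : |A * (2*t - 10/3)| ≤ B * (10/3) := by
      rw [abs_mul, abs_of_pos hApos]
      have : |2*t - 10/3| ≤ 10/3 := by rw [abs_le]; constructor <;> nlinarith
      nlinarith
    rw [hDd, abs_mul]
    have habs : |(s+1/2) * B * (t^2 - (10/3)*t + 5) + A * (2*t - 10/3)|
        ≤ (3/2) * B * 5 + B * (10/3) := by
      calc _ ≤ |(s+1/2) * B * (t^2 - (10/3)*t + 5)| + |A * (2*t - 10/3)| := abs_add_le _ _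
        _ ≤ (3/2) * B * 5 + B * (10/3) := by
            rw [abs_of_nonneg h1']; exact add_le_add h1 h2
    have h38 : |(3:ℝ)/8| = 3/8 := by norm_num
    rw [h38]
    linarith
  -- combine
  have hLHS : |Fs s t * Dd s t| ≤ (975/128) * (A * B) := by
    rw [abs_mul, abs_of_pos hFspos]
    calc Fs s t * |Dd s t| ≤ ((15/8) * A) * ((65/16) * B) := by
          apply mul_le_mul hFsle hDle (abs_nonneg _) (by positivity)
      _ = (975/128) * (A * B) := by ring
  refine hLHS.trans ?_
  have hmul : (0:ℝ) < 975/128 := by norm_num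
  rw [mul_le_mul_iff_right₀ hmul, hABeq]
  have hexp : (s + 1/2) * (2 - 1/s) ≤ 2 * s := by
    have h : (s + 1/2) * (2 - 1/s) = 2*s - 1/(2*s) := by field_simp; ring
    have h2 : 0 < 1/(2*s) := by positivity
    rw [h]; linarith
  calc t ^ (2*s) ≤ t ^ ((s + 1/2) * (2 - 1/s)) :=
        Real.rpow_le_rpow_of_exponent_ge ht0 ht1.le hexp
    _ = A ^ (2 - 1/s) := hApow.symm
    _ ≤ Fs s t ^ (2 - 1/s) := by
        apply Real.rpow_le_rpow hApos.le hFsge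
        have : 1/s < 2 := by rw [div_lt_iff₀ hs0]; linarith
        linarith

set_option maxHeartbeats 1000000 in
/-- For `s ∈ (1/2, 1]` and `G_s = F_s · F_s'`, there is `k_s > 0` such that
`|G_s(t)| ≤ k_s · F_s(t)^{2 − 1/s}` whenever `|t| ≤ 1`. -/
theorem stmt_16 (s : ℝ) (hs1 : 1 / 2 < s) (hs2 : s ≤ 1) :
    ∃ ks : ℝ, 0 < ks ∧ ∀ t : ℝ, |t| ≤ 1 →
      |Fs s t * deriv (Fs s) t| ≤ ks * Fs s t ^ (2 - 1 / s) := by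
  have hs0 : 0 < s := lt_trans (by norm_num) hs1
  refine ⟨975/128, by norm_num, ?_⟩
  have key : ∀ t : ℝ, 0 ≤ t → t ≤ 1 →
      |Fs s t * deriv (Fs s) t| ≤ (975/128) * Fs s t ^ (2 - 1/s) := by
    intro t ht0 ht1
    rcases eq_or_lt_of_le ht0 with h0 | h0
    · -- t = 0
      have hFs0 : Fs s 0 = 0 := by simp [Fs, theta, Real.zero_rpow hs0.ne']
      have hpos : 0 < 2 - 1/s := by
        have : 1/s < 2 := by rw [div_lt_iff₀ hs0]; linarith
        linarith
      rw [← h0, hFs0, Real.zero_rpow hpos.ne', mul_zero, zero_mul, abs_zero]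
    rcases eq_or_lt_of_le ht1 with h1 | h1
    · -- t = 1
      subst h1
      rw [(hasDerivAt_Fs_one s hs0).deriv]
      have hFs1 : Fs s 1 = 1 := by
        simp only [Fs, theta, abs_one, le_refl, if_pos, Real.one_rpow, one_pow, mul_one]
        norm_num
      rw [hFs1, Real.one_rpow, one_mul, mul_one, abs_of_pos hs0]
      linarith
    · rw [(hasDerivAt_Fs s h0 h1).deriv]
      exact key_bound s hs1 hs2 h0 h1
  intro t habs
  rcases le_or_gt 0 t with ht | ht
  · exact key t ht (by rwa [abs_of_nonneg ht] at habs)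
  · have h1 : Fs s = fun x => Fs s (-x) := by funext x; rw [Fs_neg]
    have h2 : deriv (Fs s) t = -deriv (Fs s) (-t) := by
      conv_lhs => rw [h1]
      exact deriv_comp_neg (Fs s) t
    have h3 : Fs s t = Fs s (-t) := (Fs_neg s t).symm
    rw [h2, h3]
    have : |Fs s (-t) * -deriv (Fs s) (-t)| = |Fs s (-t) * deriv (Fs s) (-t)| := by
      rw [mul_neg, abs_neg]
    rw [this]
    exact key (-t) (by linarith) (by rwa [abs_of_neg ht] at habs)
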